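/- arXiv:0803.3344 — 2 statements merged into one kernel-verified Lean document; each statement's English description precedes it below -/
import Mathlib

section
/- Let M ∈ ℕ∪{∞}, let c_k ∈ (−1,1) for 1 ≤ k < M+1, let λ ∈ (0,1) and C > 0, and for each small t ≠ 0 let s_{k,t} ∈ ℝ satisfy |s_{k,t}| ≤ C·λ^k for all k and lim_{t→0} s_{k,t} = s_k for each k. Let h_t: I → I be increasing homeomorphisms with h_0 = id such that (h_t(x) − x)/t converges as t → 0, uniformly in x ∈ I, to a continuous function α: I → ℝ. Then for every continuous ψ: I → ℝ, lim_{t→0} (1/t) ∫_I ψ(x)·Σ_k s_{k,t}·(H_{h_t(c_k)}(x) − H_{c_k}(x)) dx = −Σ_k α(c_k)·s_k·ψ(c_k). -/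
open MeasureTheory Set Filter Topology
open scoped Classical

noncomputable section

/-- The interval `I = [-1,1]`. -/
def II : Set ℝ := Set.Icc (-1) 1

/-- Data of a piecewise `C^k` map on `I`: the map together with its one-sided
derivative functions on `[-1,0]` and `[0,1]`. -/
structure PEUData where
  f : ℝ → ℝ
  dL : ℝ → ℝ
  dR : ℝ → ℝ

/-- The derivative `f'` away from the critical point `0`
(for `x < 0` the left branch derivative, for `x ≥ 0` the right branch one;
at `x = 0` it is the right one-sided derivative `f'_+(0)`). -/
def PEUData.d (F : PEUData) (x : ℝ) : ℝ := if x < 0 then F.dL x else F.dR x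

/-- The second derivative `f''` away from the critical point. -/
def PEUData.d2 (F : PEUData) (x : ℝ) : ℝ :=
  if x < 0 then derivWithin F.dL (Set.Icc (-1:ℝ) 0) x
  else derivWithin F.dR (Set.Icc (0:ℝ) 1) x

/-- `F` is a piecewise expanding `C^k` unimodal map. -/
def IsPEU (k : ℕ) (F : PEUData) : Prop :=
  ContinuousOn F.f II ∧
  ContDiffOn ℝ k F.f (Set.Icc (-1:ℝ) 0) ∧ ContDiffOn ℝ k F.f (Set.Icc (0:ℝ) 1) ∧
  (∀ x ∈ Set.Icc (-1:ℝ) 0, HasDerivWithinAt F.f (F.dL x) (Set.Icc (-1:ℝ) 0) x) ∧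
  (∀ x ∈ Set.Icc (0:ℝ) 1, HasDerivWithinAt F.f (F.dR x) (Set.Icc (0:ℝ) 1) x) ∧
  F.f (-1) = -1 ∧ F.f 1 = -1 ∧
  (∃ L > 1, (∀ x ∈ Set.Icc (-1:ℝ) 0, x ≠ 0 → L ≤ |F.dL x|) ∧
      (∀ x ∈ Set.Icc (0:ℝ) 1, x ≠ 0 → L ≤ |F.dR x|)) ∧
  F.f 0 ≤ 1

/-- The critical orbit `c_j = f^j(0)`. -/
def PEUData.c (F : PEUData) (j : ℕ) : ℝ := F.f^[j] 0

/-- The critical point `0` is periodic. -/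
def PEUData.critPer (F : PEUData) : Prop := ∃ q, 0 < q ∧ F.f^[q] 0 = 0

/-- Minimal period of the critical point (junk value `0` if `0` is not periodic). -/
def PEUData.period (F : PEUData) : ℕ := sInf {q : ℕ | 0 < q ∧ F.f^[q] 0 = 0}

/-- `(f^j)'(c_1) = ∏_{i<j} f'(c_{i+1})`. -/
def PEUData.iterD (F : PEUData) (j : ℕ) : ℝ := ∏ i ∈ Finset.range j, F.d (F.c (i+1))

/-- The `j`-th term `v(c_j)/(f^j)'(c_1)` of the series defining `J(f,v)`. -/
def PEUData.Jterm (F : PEUData) (v : ℝ → ℝ) (j : ℕ) : ℝ := v (F.c j) / F.iterD j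

/-- `J(f,v) = ∑_{j=0}^{M_f-1} v(c_j)/(f^j)'(c_1)`. -/
def PEUData.J (F : PEUData) (v : ℝ → ℝ) : ℝ :=
  if F.critPer then ∑ j ∈ Finset.range F.period, F.Jterm v j else ∑' j, F.Jterm v j

/-- `F` is good: either `0` is not periodic, or
`|(f^{q-1})'(f(0))| · min(|f'_+(0)|, |f'_-(0)|) > 2`. -/
def PEUData.Good (F : PEUData) : Prop :=
  ¬ F.critPer ∨ 2 < |F.iterD (F.period - 1)| * min |F.dR 0| |F.dL 0|

/-- Topological mixing of `f` on a set `s`. -/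
def TopMixingOn (f : ℝ → ℝ) (s : Set ℝ) : Prop :=
  ∀ U V : Set ℝ, IsOpen U → IsOpen V → (U ∩ s).Nonempty → (V ∩ s).Nonempty →
    ∃ N, ∀ n ≥ N, (f^[n] '' (U ∩ s) ∩ V).Nonempty

/-- `F` is mixing: topologically mixing on `[c_2, c_1]`. -/
def PEUData.Mixing (F : PEUData) : Prop :=
  TopMixingOn F.f (Set.Icc (F.f (F.f 0)) (F.f 0))

/-- `u` is `β`-Hölder on `I`. -/
def IsHolderOn (β : ℝ) (u : ℝ → ℝ) : Prop :=
  ∃ K : ℝ, ∀ x ∈ II, ∀ y ∈ II, |u x - u y| ≤ K * |x - y| ^ β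

/-- The `β`-Hölder norm `|u|_β = sup_I |u| + sup_{x≠y} |u(x)-u(y)|/|x-y|^β`. -/
def holderNorm (β : ℝ) (u : ℝ → ℝ) : ℝ :=
  (⨆ x : II, |u (x : ℝ)|) +
    ⨆ q : {q : ℝ × ℝ // q.1 ∈ II ∧ q.2 ∈ II ∧ q.1 ≠ q.2},
      |u q.1.1 - u q.1.2| / |q.1.1 - q.1.2| ^ β

/-- The `B^k` norm: the max of the `C^k` norms on `[-1,0]` and on `[0,1]`. -/
def BnormK (k : ℕ) (g : ℝ → ℝ) : ℝ :=
  max (⨆ j : Fin (k+1), ⨆ x : Set.Icc (-1:ℝ) 0,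
        |iteratedDerivWithin j.1 g (Set.Icc (-1:ℝ) 0) x|)
      (⨆ j : Fin (k+1), ⨆ x : Set.Icc (0:ℝ) 1,
        |iteratedDerivWithin j.1 g (Set.Icc (0:ℝ) 1) x|)

/-- Data of a family `t ↦ f_t`: `T a t` is the `a`-th `t`-derivative of `f_t`
(so `T 0 t = f_t`), and `dL t`, `dR t` are the one-sided spatial derivatives of `f_t`. -/
structure PEFam where
  T : ℕ → ℝ → ℝ → ℝ
  dL : ℝ → ℝ → ℝ
  dR : ℝ → ℝ → ℝ

def PEFam.f (fam : PEFam) (t : ℝ) : ℝ → ℝ := fam.T 0 t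

def PEFam.toData (fam : PEFam) (t : ℝ) : PEUData := ⟨fam.T 0 t, fam.dL t, fam.dR t⟩

/-- Spatial derivative `f'_t` of the member `f_t` of a family. -/
def PEFam.d (fam : PEFam) (t x : ℝ) : ℝ := if x < 0 then fam.dL t x else fam.dR t x

/-- `H t` is the derivative of `t ↦ G t` at `t` (within `s`) w.r.t. the `B^k` norm. -/
def BDerivWithinAt (k : ℕ) (s : Set ℝ) (G H : ℝ → ℝ → ℝ) (t : ℝ) : Prop :=
  Tendsto (fun u => BnormK k (fun x => G u x - G t x - (u - t) * H t x) / |u - t|)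
    (𝓝[s \ {t}] t) (𝓝 0)

/-- `t ↦ G t` is continuous at `t` (within `s`) w.r.t. the `B^k` norm. -/
def BContWithinAt (k : ℕ) (s : Set ℝ) (G : ℝ → ℝ → ℝ) (t : ℝ) : Prop :=
  Tendsto (fun u => BnormK k (fun x => G u x - G t x)) (𝓝[s] t) (𝓝 0)

/-- `fam` is a `C^j` family of piecewise expanding `C^k` unimodal maps on `(-ε,ε)`:
each `f_t ∈ U^k`, and `t ↦ f_t` is `C^j` as a map into `(B^k, ‖·‖_{B^k})`, the
successive `t`-derivatives being the `fam.T a`. -/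
def IsPEFam (j k : ℕ) (ε : ℝ) (fam : PEFam) : Prop :=
  0 < ε ∧ (∀ t ∈ Set.Ioo (-ε) ε, IsPEU k (fam.toData t)) ∧
  (∀ a < j, ∀ t ∈ Set.Ioo (-ε) ε,
    BDerivWithinAt k (Set.Ioo (-ε) ε) (fam.T a) (fam.T (a+1)) t) ∧
  (∀ a ≤ j, ∀ t ∈ Set.Ioo (-ε) ε, BContWithinAt k (Set.Ioo (-ε) ε) (fam.T a) t)

/-- A self-homeomorphism of `I` (continuous bijection of the compact interval). -/
def IsHomeoI (h : ℝ → ℝ) : Prop := ContinuousOn h II ∧ Set.BijOn h II II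

/-- The family is in the topological class of `f_0`, witnessed by conjugacies `h_t`:
`h_0 = id` and `h_t ∘ f_0 = f_t ∘ h_t`. -/
def InTopClass (ε : ℝ) (fam : PEFam) (h : ℝ → ℝ → ℝ) : Prop :=
  (∀ x ∈ II, h 0 x = x) ∧
  ∀ t ∈ Set.Ioo (-ε) ε, IsHomeoI (h t) ∧ ∀ x ∈ II, h t (fam.f 0 x) = fam.f t (h t x)

/-- The family is tangent at `t = 0` to the topological class of `f_0`. -/
def TangentToTopClass (j k : ℕ) (ε : ℝ) (fam : PEFam) : Prop :=
  ∃ ε' : ℝ, 0 < ε' ∧ ∃ fam' : PEFam, IsPEFam j k ε' fam' ∧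
    (∃ h, InTopClass ε' fam' h) ∧
    (∀ x ∈ II, fam'.f 0 x = fam.f 0 x) ∧ (∀ x ∈ II, fam'.T 1 0 x = fam.T 1 0 x)

/-- `μ` is the SRB measure of `F`: an invariant Borel probability measure on `I`
absolutely continuous w.r.t. Lebesgue. -/
def IsSRB (F : PEUData) (μ : Measure ℝ) : Prop :=
  IsProbabilityMeasure μ ∧ μ ≪ volume ∧ μ IIᶜ = 0 ∧
  ∀ s : Set ℝ, MeasurableSet s → μ (F.f ⁻¹' s) = μ s

/-- `ψ` is `C^j` on `I` with Lipschitz `j`-th derivative. -/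
def CjLip (j : ℕ) (ψ : ℝ → ℝ) : Prop :=
  ContDiffOn ℝ j ψ II ∧ ∃ K : NNReal, LipschitzOnWith K (iteratedDerivWithin j ψ II) II

/-- `(∑_{i<n} |φ(x_{i+1}) - φ(x_i)|^p)^{1/p}` for a finite increasing sequence
`w = (n, x)`. -/
def pvarSum (p : ℝ) (φ : ℝ → ℝ) (w : ℕ × (ℕ → ℝ)) : ℝ :=
  (∑ i ∈ Finset.range w.1, |φ (w.2 (i+1)) - φ (w.2 i)| ^ p) ^ (1/p)

/-- The `p`-variation of `φ`. -/
def varP (p : ℝ) (φ : ℝ → ℝ) : ℝ :=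
  ⨆ w : {w : ℕ × (ℕ → ℝ) // StrictMonoOn w.2 (Set.Iic w.1)}, pvarSum p φ w.1

/-- `φ` represents an element of `BV_p`: supported in `I` with finite `p`-variation. -/
def MemBVp (p : ℝ) (φ : ℝ → ℝ) : Prop :=
  (∀ x, x ∉ II → φ x = 0) ∧
  BddAbove (Set.range fun w : {w : ℕ × (ℕ → ℝ) // StrictMonoOn w.2 (Set.Iic w.1)} =>
    pvarSum p φ w.1)

/-- The `BV_p` norm: infimum of `var_p` over representatives differing from `φ`
on an at most countable set. -/
def BVpNorm (p : ℝ) (φ : ℝ → ℝ) : ℝ :=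
  ⨅ ψ : {ψ : ℝ → ℝ // {x | ψ x ≠ φ x}.Countable}, varP p ψ.1

/-- `H t` is the derivative of the curve `t ↦ G t ∈ BV_p` at `t` (within `s`). -/
def BVDerivWithinAt (p : ℝ) (s : Set ℝ) (G H : ℝ → ℝ → ℝ) (t : ℝ) : Prop :=
  Tendsto (fun u => BVpNorm p (fun x => G u x - G t x - (u - t) * H t x) / |u - t|)
    (𝓝[s \ {t}] t) (𝓝 0)

/-- Continuity of the curve `t ↦ G t ∈ BV_p` at `t` (within `s`). -/
def BVContWithinAt (p : ℝ) (s : Set ℝ) (G : ℝ → ℝ → ℝ) (t : ℝ) : Prop :=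
  Tendsto (fun u => BVpNorm p (fun x => G u x - G t x)) (𝓝[s] t) (𝓝 0)

/-- `t ↦ G t` is a `C¹` map from `(-ε,ε)` to `BV_p`, with derivative `t ↦ H t`. -/
def C1IntoBVp (p ε : ℝ) (G H : ℝ → ℝ → ℝ) : Prop :=
  (∀ t ∈ Set.Ioo (-ε) ε, MemBVp p (G t) ∧ MemBVp p (H t)) ∧
  (∀ t ∈ Set.Ioo (-ε) ε, BVDerivWithinAt p (Set.Ioo (-ε) ε) G H t) ∧
  (∀ t ∈ Set.Ioo (-ε) ε, BVContWithinAt p (Set.Ioo (-ε) ε) H t)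

/-- The norm of the Banach space of `C¹` maps from `(-ε,ε)` to `BV_p`, applied
to a map `G` with derivative `H`. -/
def C1BVNorm (p ε : ℝ) (G H : ℝ → ℝ → ℝ) : ℝ :=
  (⨆ t : Set.Ioo (-ε) ε, BVpNorm p (G (t : ℝ))) +
    ⨆ t : Set.Ioo (-ε) ε, BVpNorm p (H (t : ℝ))

/-- `t ↦ G 0 t` is a `C^j` map from `(-ε,ε)` to `BV_p`, with successive
`t`-derivatives `G a`. -/
def CjIntoBVp (p ε : ℝ) (j : ℕ) (G : ℕ → ℝ → ℝ → ℝ) : Prop :=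
  (∀ a ≤ j, ∀ t ∈ Set.Ioo (-ε) ε, MemBVp p (G a t)) ∧
  (∀ a < j, ∀ t ∈ Set.Ioo (-ε) ε, BVDerivWithinAt p (Set.Ioo (-ε) ε) (G a) (G (a+1)) t) ∧
  (∀ a ≤ j, ∀ t ∈ Set.Ioo (-ε) ε, BVContWithinAt p (Set.Ioo (-ε) ε) (G a) t)

/-- The norm of the Banach space of `C^j` maps from `(-ε,ε)` to `BV_p`. -/
def CjBVNorm (p ε : ℝ) (j : ℕ) (G : ℕ → ℝ → ℝ → ℝ) : ℝ :=
  ∑ a ∈ Finset.range (j+1), ⨆ t : Set.Ioo (-ε) ε, BVpNorm p (G a (t : ℝ))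

/-- Piecewise (one-sided) derivative of a function in `B^1`. -/
def pwDeriv (v : ℝ → ℝ) (x : ℝ) : ℝ :=
  if x < 0 then derivWithin v (Set.Icc (-1:ℝ) 0) x else derivWithin v (Set.Icc (0:ℝ) 1) x

/-- The Heaviside-type function `H_u`. -/
def Heav (u x : ℝ) : ℝ := if x < u then -1 else if x = u then -(1/2) else 0

/-- The weight `g_{s,t}(y) = exp(s ψ(h_t(y)))/|f'_t(h_t(y))|`, as an element of `BV_p`
(extended by `0` outside `I`). -/
def gfun (fam : PEFam) (h : ℝ → ℝ → ℝ) (ψ : ℝ → ℝ) (s t x : ℝ) : ℝ :=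
  if x ∈ II then Real.exp (s * ψ (h t x)) / |fam.d t (h t x)| else 0

end

lemma measurable_heav (u : ℝ) : Measurable (Heav u) := by
  unfold Heav
  exact Measurable.ite measurableSet_Iio measurable_const
    (Measurable.ite (measurableSet_eq) measurable_const measurable_const)

lemma heav_abs_le (u x : ℝ) : |Heav u x| ≤ 1 := by
  unfold Heav; split_ifs <;> rw [abs_le] <;> norm_num

lemma heav_diff_ae (a b : ℝ) : ∀ᵐ x : ℝ, Heav a x - Heav b x =
    Set.indicator (Set.Ioc b a) (fun _ => (-1:ℝ)) x
      - Set.indicator (Set.Ioc a b) (fun _ => (-1:ℝ)) x := by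
  have hz : volume ({a, b} : Set ℝ) = 0 := (Set.toFinite _).measure_zero volume
  filter_upwards [measure_eq_zero_iff_ae_notMem.mp hz] with x hx
  simp only [Set.mem_insert_iff, Set.mem_singleton_iff, not_or] at hx
  obtain ⟨hxa, hxb⟩ := hx
  rcases (Ne.lt_or_gt hxa) with h1 | h1 <;> rcases (Ne.lt_or_gt hxb) with h2 | h2 <;>
    simp [Heav, Set.indicator_apply, Set.mem_Ioc, h1, h2, h1.le, h2.le,
      lt_asymm h1, lt_asymm h2, not_le_of_gt h1, not_le_of_gt h2, hxa, hxb,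
      not_lt_of_gt h1, not_lt_of_gt h2]

lemma finite_restrict_II : IsFiniteMeasure (volume.restrict II) :=
  ⟨by rw [Measure.restrict_apply_univ]; exact measure_Icc_lt_top⟩

lemma integral_heav {ψ : ℝ → ℝ} (hψ : Continuous ψ) {M : ℝ} (hM : ∀ x, |ψ x| ≤ M)
    {a b : ℝ} (ha : a ∈ II) (hb : b ∈ II) :
    ∫ x in II, ψ x * (Heav a x - Heav b x) = -∫ x in b..a, ψ x := by
  haveI := finite_restrict_II
  have hM0 : 0 ≤ M := (abs_nonneg _).trans (hM 0)
  have hsub : ∀ u v : ℝ, u ∈ II → v ∈ II → Set.Ioc u v ⊆ II := fun u v hu hv =>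
    Set.Ioc_subset_Icc_self.trans (Set.Icc_subset_Icc hu.1 hv.2)
  have key : ∫ x in II, ψ x * (Heav a x - Heav b x)
      = ∫ x in II, ((Set.Ioc b a).indicator (fun y => -ψ y) x
          - (Set.Ioc a b).indicator (fun y => -ψ y) x) := by
    apply integral_congr_ae
    filter_upwards [ae_restrict_of_ae (heav_diff_ae a b)] with x hx
    rw [hx]
    simp only [Set.indicator_apply]
    split_ifs <;> ring
  have hint : ∀ u v : ℝ, Integrable ((Set.Ioc u v).indicator (fun y => -ψ y))
      (volume.restrict II) := by
    intro u v
    refine Integrable.mono' (integrable_const M)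
      ((hψ.neg.measurable.indicator measurableSet_Ioc).aestronglyMeasurable) ?_
    refine Filter.Eventually.of_forall fun x => ?_
    rw [Real.norm_eq_abs, Set.indicator_apply]
    split_ifs
    · rw [abs_neg]; exact hM x
    · simpa using hM0
  have hind : ∀ u v : ℝ, u ∈ II → v ∈ II →
      ∫ x in II, (Set.Ioc u v).indicator (fun y => -ψ y) x = -∫ x in Set.Ioc u v, ψ x := by
    intro u v hu hv
    rw [setIntegral_indicator measurableSet_Ioc,
      Set.inter_eq_self_of_subset_right (hsub u v hu hv), integral_neg]
  rw [key, integral_sub (hint b a) (hint a b), hind b a hb ha, hind a b ha hb]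
  have : ∫ x in b..a, ψ x = (∫ x in Set.Ioc b a, ψ x) - ∫ x in Set.Ioc a b, ψ x := rfl
  rw [this]; ring

lemma key_limit {ψ : ℝ → ℝ} (hψ : Continuous ψ) (g : ℝ → ℝ) (b L : ℝ)
    (hg : Tendsto (fun t => (g t - b) / t) (𝓝[≠] (0:ℝ)) (𝓝 L)) :
    Tendsto (fun t => (1/t) * ∫ x in b..(g t), ψ x) (𝓝[≠] (0:ℝ)) (𝓝 (L * ψ b)) := by
  have htid : Tendsto (fun t : ℝ => t) (𝓝[≠] (0:ℝ)) (𝓝 0) :=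
    tendsto_id.mono_left nhdsWithin_le_nhds
  have hne : ∀ᶠ t in (𝓝[≠] (0:ℝ)), t ≠ 0 := self_mem_nhdsWithin
  have hglim : Tendsto g (𝓝[≠] (0:ℝ)) (𝓝 b) := by
    have h1 : Tendsto (fun t => ((g t - b) / t) * t + b) (𝓝[≠] (0:ℝ)) (𝓝 (L * 0 + b)) :=
      (hg.mul htid).add_const b
    rw [mul_zero, zero_add] at h1
    refine h1.congr' ?_
    filter_upwards [hne] with t ht
    rw [div_mul_cancel₀ _ ht]; ring
  have hΦ : HasDerivAt (fun u => ∫ x in b..u, ψ x) (ψ b) b :=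
    intervalIntegral.integral_hasDerivAt_right (hψ.intervalIntegrable b b)
      (hψ.stronglyMeasurable.stronglyMeasurableAtFilter) hψ.continuousAt
  have o1 := hasDerivAt_iff_isLittleO.mp hΦ
  have o2 := o1.comp_tendsto hglim
  have oO : (fun t => g t - b) =O[𝓝[≠] (0:ℝ)] fun t => t := by
    apply Asymptotics.isBigO_of_div_tendsto_nhds (l := 𝓝[≠] (0:ℝ)) (c := L)
    · filter_upwards [hne] with t ht h; exact absurd h ht
    · exact hg
  have o3 := o2.trans_isBigO oO
  have hdiv := o3.tendsto_div_nhds_zero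
  have hb0 : (∫ x in b..b, ψ x) = 0 := intervalIntegral.integral_same
  have hfin : Tendsto
      (fun t => ((∫ x in b..(g t), ψ x) - (∫ x in b..b, ψ x) - (g t - b) • ψ b) / t
        + ((g t - b) / t) * ψ b) (𝓝[≠] (0:ℝ)) (𝓝 (0 + L * ψ b)) :=
    hdiv.add (hg.mul_const (ψ b))
  rw [zero_add] at hfin
  refine hfin.congr fun t => ?_
  rw [hb0, smul_eq_mul]
  ring

/-- claim (4.5) in the proof of Theorem `theformula`: convergence
of the singular part: `lim_{t→0} (1/t)∫ ψ · ∑_k s_{k,t}(H_{h_t(c_k)} - H_{c_k}) dx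
= -∑_k α(c_k) s_k ψ(c_k)`. -/
theorem stmt18 (c : ℕ → ℝ) (hc : ∀ k, c k ∈ Set.Ioo (-1:ℝ) 1)
    (lam C : ℝ) (hlam : lam ∈ Set.Ioo (0:ℝ) 1) (hC : 0 < C)
    (s : ℝ → ℕ → ℝ) (s0 : ℕ → ℝ)
    (hbd : ∀ t k, |s t k| ≤ C * lam ^ k)
    (hconv : ∀ k, Tendsto (fun t => s t k) (𝓝[≠] 0) (𝓝 (s0 k)))
    (h : ℝ → ℝ → ℝ)
    (hhom : ∀ t, IsHomeoI (h t) ∧ StrictMonoOn (h t) II)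
    (h0 : ∀ x ∈ II, h 0 x = x)
    (α : ℝ → ℝ) (hαc : ContinuousOn α II)
    (hunif : TendstoUniformlyOn (fun t x => (h t x - x) / t) α (𝓝[≠] 0) II) :
    ∀ ψ : ℝ → ℝ, ContinuousOn ψ II →
      Tendsto (fun t =>
          (1/t) * ∫ x in II, ψ x * ∑' k, s t k * (Heav (h t (c k)) x - Heav (c k) x))
        (𝓝[≠] 0) (𝓝 (-∑' k, α (c k) * s0 k * ψ (c k))) := by
  intro ψ hψc
  haveI := finite_restrict_II
  -- the continuous bounded extension of ψ
  set p : ℝ → ℝ := fun x => max (-1) (min 1 x) with hpdef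
  have hpII : ∀ x, p x ∈ II := fun x =>
    ⟨le_max_left _ _, max_le (by norm_num) (min_le_left _ _)⟩
  set ψ' : ℝ → ℝ := fun x => ψ (p x) with hψ'def
  have hψ'cont : Continuous ψ' :=
    hψc.comp_continuous (continuous_const.max (continuous_const.min continuous_id)) hpII
  have hψ'eq : ∀ x ∈ II, ψ' x = ψ x := by
    intro x hx
    have : p x = x := by
      rw [hpdef]; simp only []
      rw [min_eq_right hx.2, max_eq_right hx.1]
    rw [hψ'def]; simp only []; rw [this]
  obtain ⟨M, hMII⟩ := isCompact_Icc.exists_bound_of_continuousOn hψc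
  have hM : ∀ x, |ψ' x| ≤ M := fun x => hMII _ (hpII x)
  have hM0 : 0 ≤ M := (abs_nonneg _).trans (hM 0)
  obtain ⟨A, hA⟩ := isCompact_Icc.exists_bound_of_continuousOn hαc
  have hA0 : 0 ≤ A := (norm_nonneg _).trans (hA 0 (by constructor <;> norm_num))
  have hck : ∀ k, c k ∈ II := fun k => Set.Ioo_subset_Icc_self (hc k)
  have hhII : ∀ t k, h t (c k) ∈ II := fun t k => ((hhom t).1.2).mapsTo (hck k)
  -- eventual bound on |h t x - x|
  have hEv : ∀ᶠ t in (𝓝[≠] (0:ℝ)), t ≠ 0 ∧ ∀ x ∈ II, |h t x - x| ≤ (A + 1) * |t| := by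
    have h1 := (Metric.tendstoUniformlyOn_iff.mp hunif) 1 one_pos
    filter_upwards [h1, self_mem_nhdsWithin] with t h1t ht0
    refine ⟨ht0, fun x hx => ?_⟩
    have h2 : |(h t x - x) / t| ≤ A + 1 := by
      have h3 := h1t x hx
      rw [Real.dist_eq] at h3
      calc |(h t x - x) / t| = |α x + ((h t x - x) / t - α x)| := by ring_nf
        _ ≤ |α x| + |(h t x - x) / t - α x| := abs_add_le _ _
        _ ≤ A + 1 := add_le_add (hA x hx) (by rw [abs_sub_comm]; linarith)
    have h4 : |h t x - x| = |(h t x - x) / t| * |t| := by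
      rw [abs_div, div_mul_cancel₀]
      exact abs_ne_zero.mpr ht0
    rw [h4]
    exact mul_le_mul_of_nonneg_right h2 (abs_nonneg _)
  -- the identity
  have ident : ∀ t : ℝ,
      (1/t) * ∫ x in II, ψ x * ∑' k, s t k * (Heav (h t (c k)) x - Heav (c k) x)
        = ∑' k, s t k * (-((1/t) * ∫ x in (c k)..(h t (c k)), ψ' x)) := by
    intro t
    have hd2 : ∀ a b x : ℝ, |Heav a x - Heav b x| ≤ 2 := by
      intro a b x
      calc |Heav a x - Heav b x| ≤ |Heav a x| + |Heav b x| := abs_sub _ _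
        _ ≤ 2 := by linarith [heav_abs_le a x, heav_abs_le b x]
    have hbound : ∀ k : ℕ, ∀ x : ℝ,
        ‖ψ' x * (s t k * (Heav (h t (c k)) x - Heav (c k) x))‖ ≤ M * (C * lam ^ k * 2) := by
      intro k x
      rw [Real.norm_eq_abs, abs_mul, abs_mul]
      have h1 : (0:ℝ) ≤ C * lam ^ k := le_trans (abs_nonneg _) (hbd t k)
      refine mul_le_mul (hM x) ?_ (by positivity) hM0
      exact mul_le_mul (hbd t k) (hd2 _ _ x) (abs_nonneg _) h1
    have hFint : ∀ k : ℕ, Integrable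
        (fun x => ψ' x * (s t k * (Heav (h t (c k)) x - Heav (c k) x)))
        (volume.restrict II) := by
      intro k
      refine Integrable.mono' (integrable_const (M * (C * lam ^ k * 2)))
        ((hψ'cont.measurable.mul (measurable_const.mul
          ((measurable_heav _).sub (measurable_heav _)))).aestronglyMeasurable) ?_
      exact Filter.Eventually.of_forall (hbound k)
    have hFsum : Summable fun k : ℕ => ∫ x in II,
        ‖ψ' x * (s t k * (Heav (h t (c k)) x - Heav (c k) x))‖ := by
      refine Summable.of_nonneg_of_le (fun k => integral_nonneg fun x => norm_nonneg _)
        (fun k => ?_)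
        (((summable_geometric_of_lt_one hlam.1.le hlam.2).mul_left
          (M * (C * 2) * (volume II).toReal)))
      calc ∫ x in II, ‖ψ' x * (s t k * (Heav (h t (c k)) x - Heav (c k) x))‖
          ≤ ∫ _x in II, (M * (C * lam ^ k * 2)) :=
            integral_mono (hFint k).norm (integrable_const _) (hbound k)
        _ = (volume II).toReal * (M * (C * lam ^ k * 2)) := by
            rw [setIntegral_const]; rfl
        _ = M * (C * 2) * (volume II).toReal * lam ^ k := by ring
    have hswap : ∫ x in II, ψ x * ∑' k, s t k * (Heav (h t (c k)) x - Heav (c k) x)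
        = ∑' k, ∫ x in II, ψ' x * (s t k * (Heav (h t (c k)) x - Heav (c k) x)) := by
      rw [MeasureTheory.integral_tsum_of_summable_integral_norm hFint hFsum]
      refine setIntegral_congr_fun measurableSet_Icc fun x hx => ?_
      rw [tsum_mul_left, hψ'eq x hx]
    rw [hswap]
    have hterm : ∀ k : ℕ, ∫ x in II, ψ' x * (s t k * (Heav (h t (c k)) x - Heav (c k) x))
        = s t k * (-(∫ x in (c k)..(h t (c k)), ψ' x)) := by
      intro k
      have : (fun x => ψ' x * (s t k * (Heav (h t (c k)) x - Heav (c k) x)))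
          = fun x => s t k * (ψ' x * (Heav (h t (c k)) x - Heav (c k) x)) :=
        funext fun x => by ring
      rw [this, MeasureTheory.integral_const_mul, integral_heav hψ'cont hM (hhII t k) (hck k)]
    rw [tsum_congr hterm, ← tsum_mul_left]
    exact tsum_congr fun k => by ring
  -- the limit
  have hmain : Tendsto
      (fun t => ∑' k, s t k * (-((1/t) * ∫ x in (c k)..(h t (c k)), ψ' x)))
      (𝓝[≠] (0:ℝ)) (𝓝 (∑' k, s0 k * (-(α (c k) * ψ' (c k))))) := by
    refine tendsto_tsum_of_dominated_convergence
      (bound := fun k => C * lam ^ k * (M * (A + 1)))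
      (((summable_geometric_of_lt_one hlam.1.le hlam.2).mul_left C).mul_right
        (M * (A + 1))) (fun k => ?_) ?_
    · exact (hconv k).mul
        ((key_limit hψ'cont (fun t => h t (c k)) (c k) (α (c k))
          (hunif.tendsto_at (hck k))).neg)
    · filter_upwards [hEv] with t ht k
      obtain ⟨ht0, hb⟩ := ht
      rw [Real.norm_eq_abs, abs_mul, abs_neg, abs_mul]
      have h1 : |(∫ x in (c k)..(h t (c k)), ψ' x)| ≤ M * ((A + 1) * |t|) := by
        have h2 : ‖(∫ x in (c k)..(h t (c k)), ψ' x)‖ ≤ M * |h t (c k) - c k| :=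
          intervalIntegral.norm_integral_le_of_norm_le_const fun x _ => hM x
        rw [Real.norm_eq_abs] at h2
        exact h2.trans (mul_le_mul_of_nonneg_left (hb _ (hck k)) hM0)
      have ht' : (0:ℝ) < |t| := abs_pos.mpr ht0
      have h3 : |1/t| * |(∫ x in (c k)..(h t (c k)), ψ' x)| ≤ M * (A + 1) := by
        rw [abs_div, abs_one, div_mul_eq_mul_div, one_mul, div_le_iff₀ ht']
        calc |(∫ x in (c k)..(h t (c k)), ψ' x)| ≤ M * ((A + 1) * |t|) := h1
          _ = M * (A + 1) * |t| := by ring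
      calc |s t k| * (|1/t| * |(∫ x in (c k)..(h t (c k)), ψ' x)|)
          ≤ (C * lam ^ k) * (M * (A + 1)) :=
            mul_le_mul (hbd t k) h3 (by positivity)
              (le_trans (abs_nonneg _) (hbd t k))
        _ = C * lam ^ k * (M * (A + 1)) := by ring
  have hval : (∑' k, s0 k * (-(α (c k) * ψ' (c k)))) = -∑' k, α (c k) * s0 k * ψ (c k) := by
    rw [← tsum_neg]
    exact tsum_congr fun k => by rw [hψ'eq _ (hck k)]; ring
  rw [← hval]
  exact hmain.congr fun t => (ident t).symm
end

section
/- Let ε > 0 and for each t ∈ (−ε,ε) let ρ_t: I → ℝ be a C¹ function, with sup_t ‖ρ_t‖_{C¹(I)} < ∞, such that the family of derivatives {ρ'_t} is uniformly equicontinuous on I and ρ'_t → ρ'_0 uniformly on I as t → 0. Let h_t: I → I be homeomorphisms with h_0 = id such that (h_t(x) − x)/t converges as t → 0, uniformly in x ∈ I, to a bounded function α: I → ℝ. Then for every continuous ψ: I → ℝ, lim_{t→0} (1/t) ∫_I ψ(x)·(ρ_t(x) − ρ_t(h_t(x))) dx = −∫_I ψ(x)·ρ'_0(x)·α(x) dx.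 -/
open MeasureTheory Set Filter Topology
open scoped Classical

/-- claim (4.14) in the proof of Theorem `theformula`: convergence
of the regular part: `lim_{t→0} (1/t)∫ ψ (ρ_t - ρ_t∘h_t) dx = -∫ ψ ρ'_0 α dx` for a
uniformly `C¹`-bounded, derivative-equicontinuous family `ρ_t`. -/
theorem stmt19 (ε : ℝ) (hε : 0 < ε) (ρ dρ : ℝ → ℝ → ℝ)
    (hderiv : ∀ t ∈ Set.Ioo (-ε) ε, ∀ x ∈ II, HasDerivWithinAt (ρ t) (dρ t x) II x)
    (hbd : ∃ B, ∀ t ∈ Set.Ioo (-ε) ε, ∀ x ∈ II, |ρ t x| ≤ B ∧ |dρ t x| ≤ B)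
    (hequi : ∀ η > 0, ∃ δ > 0, ∀ t ∈ Set.Ioo (-ε) ε, ∀ x ∈ II, ∀ y ∈ II,
      |x - y| < δ → |dρ t x - dρ t y| < η)
    (hconv : TendstoUniformlyOn (fun t => dρ t) (dρ 0) (𝓝[Set.Ioo (-ε) ε] 0) II)
    (h : ℝ → ℝ → ℝ) (hhom : ∀ t ∈ Set.Ioo (-ε) ε, IsHomeoI (h t))
    (h0 : ∀ x ∈ II, h 0 x = x)
    (α : ℝ → ℝ) (hαb : ∃ B, ∀ x ∈ II, |α x| ≤ B)
    (hunif : TendstoUniformlyOn (fun t x => (h t x - x) / t) α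
      (𝓝[Set.Ioo (-ε) ε \ {0}] 0) II) :
    ∀ ψ : ℝ → ℝ, ContinuousOn ψ II →
      Tendsto (fun t => (1/t) * ∫ x in II, ψ x * (ρ t x - ρ t (h t x)))
        (𝓝[Set.Ioo (-ε) ε \ {0}] 0)
        (𝓝 (-∫ x in II, ψ x * dρ 0 x * α x)) := by
  intro ψ hψ
  have h0II : (0:ℝ) ∈ II := by norm_num [II]
  have hSsub : Set.Ioo (-ε) ε \ {0} ⊆ Set.Ioo (-ε) ε := Set.diff_subset
  have hIIc : IsCompact II := isCompact_Icc
  have hIIm : MeasurableSet II := measurableSet_Icc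
  have h0S : (0:ℝ) ∈ Set.Ioo (-ε) ε := ⟨neg_lt_zero.mpr hε, hε⟩
  have hsub2 : Set.Ioo (0:ℝ) ε ⊆ Set.Ioo (-ε) ε \ {0} := by
    intro x hx
    exact ⟨⟨lt_trans (neg_lt_zero.mpr hε) hx.1, hx.2⟩, by simp [ne_of_gt hx.1]⟩
  haveI hNB : (𝓝[Set.Ioo (-ε) ε \ {0}] (0:ℝ)).NeBot := by
    have h1 : (0:ℝ) ∈ closure (Set.Ioo (0:ℝ) ε) := by
      rw [closure_Ioo (ne_of_lt hε)]
      exact ⟨le_refl 0, le_of_lt hε⟩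
    exact (mem_closure_iff_nhdsWithin_neBot.mp h1).mono (nhdsWithin_mono 0 hsub2)
  obtain ⟨B, hB⟩ := hbd
  obtain ⟨Bα, hBα⟩ := hαb
  have hB0 : 0 ≤ B := (abs_nonneg _).trans (hB 0 h0S 0 h0II).1
  have hBα0 : 0 ≤ Bα := (abs_nonneg _).trans (hBα 0 h0II)
  obtain ⟨Cψ, hCψ⟩ := hIIc.exists_bound_of_continuousOn hψ
  have hCψ0 : 0 ≤ Cψ := (norm_nonneg _).trans (hCψ 0 h0II)
  -- continuity facts
  have contρ : ∀ t ∈ Set.Ioo (-ε) ε, ContinuousOn (ρ t) II :=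
    fun t ht x hx => (hderiv t ht x hx).continuousWithinAt
  have contdρ : ∀ t ∈ Set.Ioo (-ε) ε, ContinuousOn (dρ t) II := by
    intro t ht
    rw [Metric.continuousOn_iff]
    intro x hx η hη
    obtain ⟨δ, hδ, hP⟩ := hequi η hη
    refine ⟨δ, hδ, fun y hy hxy => ?_⟩
    rw [Real.dist_eq] at hxy ⊢
    exact hP t ht y hy x hx hxy
  have contα : ContinuousOn α II := by
    refine hunif.continuousOn (Filter.Eventually.frequently ?_)
    filter_upwards [self_mem_nhdsWithin] with t ht
    exact ((hhom t ht.1).1.sub continuousOn_id).div_const t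
  have contg2 : ContinuousOn (fun x => ψ x * dρ 0 x * α x) II :=
    (hψ.mul (contdρ 0 h0S)).mul contα
  have intg2 : IntegrableOn (fun x => ψ x * dρ 0 x * α x) II :=
    contg2.integrableOn_compact hIIc
  -- key uniform estimate
  have key : ∀ η > 0, ∀ᶠ t in 𝓝[Set.Ioo (-ε) ε \ {0}] (0:ℝ), ∀ x ∈ II,
      |(1/t) * (ρ t x - ρ t (h t x)) + dρ 0 x * α x| ≤ η * (B + 2*Bα + η) := by
    intro η hη
    obtain ⟨δ, hδ, hP⟩ := hequi η hη
    have e2 := (Metric.tendstoUniformlyOn_iff.mp hunif) η hη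
    have e3 := ((Metric.tendstoUniformlyOn_iff.mp hconv) η hη).filter_mono
      (nhdsWithin_mono 0 hSsub)
    have e4 : ∀ᶠ t in 𝓝[Set.Ioo (-ε) ε \ {0}] (0:ℝ), |t| < δ / (Bα + η) := by
      have hpos : 0 < δ / (Bα + η) := div_pos hδ (by linarith)
      have h5 : ∀ᶠ t in 𝓝 (0:ℝ), |t| < δ / (Bα + η) := by
        filter_upwards [Metric.ball_mem_nhds (0:ℝ) hpos] with t ht
        simpa [Real.dist_eq] using ht
      exact h5.filter_mono nhdsWithin_le_nhds
    filter_upwards [self_mem_nhdsWithin, e2, e3, e4] with t htS h2 h3 h4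
    intro x hx
    have ht : t ∈ Set.Ioo (-ε) ε := htS.1
    have ht0 : t ≠ 0 := by
      intro hc; exact htS.2 (by simp [hc])
    have hhx : h t x ∈ II := (hhom t ht).2.mapsTo hx
    have hv : |(h t x - x) / t - α x| < η := by
      have h6 := h2 x hx
      rw [Real.dist_eq] at h6
      rw [abs_sub_comm]
      exact h6
    have hαx := hBα x hx
    have hvb : |(h t x - x) / t| ≤ Bα + η := by
      have h7 : |(h t x - x)/t| ≤ |(h t x - x)/t - α x| + |α x| := by
        simpa using abs_add_le ((h t x - x)/t - α x) (α x)
      linarith [hv.le]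
    have hub : |h t x - x| < δ := by
      have h8 : |h t x - x| = |t| * |(h t x - x)/t| := by
        rw [abs_div]
        field_simp
      rw [h8]
      calc |t| * |(h t x - x)/t| ≤ |t| * (Bα + η) :=
            mul_le_mul_of_nonneg_left hvb (abs_nonneg t)
        _ < (δ/(Bα+η)) * (Bα+η) := mul_lt_mul_of_pos_right h4 (by linarith)
        _ = δ := by field_simp
    -- MVT estimate
    have hIIu : II = Set.uIcc (-1:ℝ) 1 := (Set.uIcc_of_le (by norm_num)).symm
    have hIcc : Set.uIcc x (h t x) ⊆ II := by
      rw [hIIu]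
      exact Set.uIcc_subset_uIcc (hIIu ▸ hx) (hIIu ▸ hhx)
    have hmvt : |ρ t (h t x) - ρ t x - dρ t x * (h t x - x)| ≤ η * |h t x - x| := by
      have hcv : Convex ℝ (Set.uIcc x (h t x)) := convex_uIcc _ _
      have hder : ∀ y ∈ Set.uIcc x (h t x),
          HasDerivWithinAt (fun z => ρ t z - dρ t x * z) (dρ t y - dρ t x)
            (Set.uIcc x (h t x)) y := by
        intro y hy
        have h1 := (hderiv t ht y (hIcc hy)).mono hIcc
        have h2' : HasDerivWithinAt (fun z => dρ t x * z) (dρ t x)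
            (Set.uIcc x (h t x)) y := by
          simpa using (hasDerivWithinAt_id y (Set.uIcc x (h t x))).const_mul (dρ t x)
        exact h1.sub h2'
      have hbound : ∀ y ∈ Set.uIcc x (h t x), ‖dρ t y - dρ t x‖ ≤ η := by
        intro y hy
        have hyx : |y - x| < δ := by
          have h9 : |y - x| ≤ |h t x - x| := by
            rcases Set.mem_uIcc.mp hy with ⟨ha, hb⟩ | ⟨ha, hb⟩
            · rw [abs_of_nonneg (by linarith : (0:ℝ) ≤ y - x),
                abs_of_nonneg (by linarith : (0:ℝ) ≤ h t x - x)]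
              linarith
            · rw [abs_of_nonpos (by linarith : y - x ≤ 0),
                abs_of_nonpos (by linarith : h t x - x ≤ 0)]
              linarith
          linarith
        rw [Real.norm_eq_abs]
        exact (hP t ht y (hIcc hy) x hx hyx).le
      have h10 := Convex.norm_image_sub_le_of_norm_hasDerivWithin_le hder hbound hcv
        Set.left_mem_uIcc Set.right_mem_uIcc
      rw [Real.norm_eq_abs, Real.norm_eq_abs] at h10
      have h11 : ρ t (h t x) - ρ t x - dρ t x * (h t x - x)
          = (ρ t (h t x) - dρ t x * (h t x)) - (ρ t x - dρ t x * x) := by ring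
      rw [h11]
      exact h10
    -- assemble
    have hE : (1/t) * (ρ t x - ρ t (h t x)) + dρ 0 x * α x
        = -(dρ t x) * ((h t x - x)/t - α x) - (dρ t x - dρ 0 x) * α x
          - (ρ t (h t x) - ρ t x - dρ t x * (h t x - x)) / t := by
      field_simp
      ring
    rw [hE]
    have hb1 : |(-(dρ t x)) * ((h t x - x)/t - α x)| ≤ B * η := by
      rw [abs_mul, abs_neg]
      exact mul_le_mul (hB t ht x hx).2 hv.le (abs_nonneg _) hB0
    have hb2 : |(dρ t x - dρ 0 x) * α x| ≤ η * Bα := by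
      rw [abs_mul]
      have h12 := h3 x hx
      rw [Real.dist_eq, abs_sub_comm] at h12
      exact mul_le_mul h12.le (hBα x hx) (abs_nonneg _) hη.le
    have hb3 : |(ρ t (h t x) - ρ t x - dρ t x * (h t x - x)) / t| ≤ η * (Bα + η) := by
      have htpos : 0 < |t| := abs_pos.mpr ht0
      rw [abs_div]
      have h13 : |ρ t (h t x) - ρ t x - dρ t x * (h t x - x)| / |t|
          ≤ (η * |h t x - x|) / |t| := (div_le_div_iff_of_pos_right htpos).mpr hmvt
      have h14 : (η * |h t x - x|) / |t| = η * |(h t x - x)/t| := by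
        rw [abs_div, mul_div_assoc]
      calc |ρ t (h t x) - ρ t x - dρ t x * (h t x - x)| / |t|
          ≤ η * |(h t x - x)/t| := by rw [← h14]; exact h13
        _ ≤ η * (Bα + η) := mul_le_mul_of_nonneg_left hvb hη.le
    calc |(-(dρ t x) * ((h t x - x)/t - α x) - (dρ t x - dρ 0 x) * α x
            - (ρ t (h t x) - ρ t x - dρ t x * (h t x - x)) / t)|
        ≤ |(-(dρ t x)) * ((h t x - x)/t - α x)| + |(dρ t x - dρ 0 x) * α x|
            + |(ρ t (h t x) - ρ t x - dρ t x * (h t x - x)) / t| := by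
          have := abs_sub (-(dρ t x) * ((h t x - x)/t - α x) - (dρ t x - dρ 0 x) * α x)
            ((ρ t (h t x) - ρ t x - dρ t x * (h t x - x)) / t)
          have h15 := abs_sub (-(dρ t x) * ((h t x - x)/t - α x))
            ((dρ t x - dρ 0 x) * α x)
          linarith
      _ ≤ B * η + η * Bα + η * (Bα + η) := by linarith
      _ = η * (B + 2*Bα + η) := by ring
  -- conclude
  rw [Metric.tendsto_nhds]
  intro η0 hη0
  set C0 : ℝ := B + 2*Bα + 1 with hC0def
  have hC0 : 0 < C0 := by positivity
  set η : ℝ := min 1 (η0 / (4 * (Cψ + 1) * C0)) with hηdef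
  have hηpos : 0 < η := lt_min one_pos (by positivity)
  have hη1 : η ≤ 1 := min_le_left _ _
  have hη2 : η ≤ η0 / (4 * (Cψ + 1) * C0) := min_le_right _ _
  filter_upwards [key η hηpos, self_mem_nhdsWithin] with t hkey htS
  have ht : t ∈ Set.Ioo (-ε) ε := htS.1
  have ht0 : t ≠ 0 := by intro hc; exact htS.2 (by simp [hc])
  have conth : ContinuousOn (fun x => ρ t (h t x)) II :=
    (contρ t ht).comp (hhom t ht).1 (hhom t ht).2.mapsTo
  have intg1 : IntegrableOn (fun x => ψ x * (ρ t x - ρ t (h t x))) II :=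
    (hψ.mul ((contρ t ht).sub conth)).integrableOn_compact hIIc
  have intg1' : IntegrableOn (fun x => (1/t) * (ψ x * (ρ t x - ρ t (h t x)))) II :=
    intg1.const_mul _
  have heq : (1/t) * (∫ x in II, ψ x * (ρ t x - ρ t (h t x)))
      - (-∫ x in II, ψ x * dρ 0 x * α x)
      = ∫ x in II, ψ x * ((1/t) * (ρ t x - ρ t (h t x)) + dρ 0 x * α x) := by
    rw [sub_neg_eq_add, ← MeasureTheory.integral_const_mul,
      ← MeasureTheory.integral_add intg1' intg2]
    congr 1
    funext x
    ring
  rw [Real.dist_eq, heq]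
  have hnorm : ∀ x ∈ II, ‖ψ x * ((1/t) * (ρ t x - ρ t (h t x)) + dρ 0 x * α x)‖
      ≤ Cψ * (η * (B + 2*Bα + η)) := by
    intro x hx
    rw [Real.norm_eq_abs, abs_mul]
    refine mul_le_mul ?_ (hkey x hx) (abs_nonneg _) hCψ0
    simpa [Real.norm_eq_abs] using hCψ x hx
  have hvol : volume II < ⊤ := by
    rw [II, Real.volume_Icc]
    exact ENNReal.ofReal_lt_top
  have hle := MeasureTheory.norm_setIntegral_le_of_norm_le_const hvol
    hnorm
  have hvol2 : (volume II).toReal = 2 := by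
    rw [II, Real.volume_Icc]
    rw [ENNReal.toReal_ofReal (by norm_num)]
    norm_num
  rw [Real.norm_eq_abs, measureReal_def, hvol2] at hle
  -- final arithmetic
  have hstep : Cψ * (η * (B + 2*Bα + η)) * 2 ≤ 2 * (Cψ + 1) * C0 * η := by
    have ha : B + 2*Bα + η ≤ C0 := by rw [hC0def]; linarith
    have hbb : Cψ * (B + 2*Bα + η) ≤ (Cψ + 1) * C0 := by nlinarith
    have hcc := mul_le_mul_of_nonneg_left hbb hηpos.le
    nlinarith [hcc]
  have hstep2 : 2 * (Cψ + 1) * C0 * η ≤ η0 / 2 := by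
    have h16 : 2 * (Cψ + 1) * C0 * η ≤ 2 * (Cψ + 1) * C0 * (η0 / (4 * (Cψ + 1) * C0)) := by
      apply mul_le_mul_of_nonneg_left hη2
      positivity
    have h17 : 2 * (Cψ + 1) * C0 * (η0 / (4 * (Cψ + 1) * C0)) = η0 / 2 := by
      field_simp
      ring
    linarith
  calc |∫ x in II, ψ x * ((1/t) * (ρ t x - ρ t (h t x)) + dρ 0 x * α x)|
      ≤ Cψ * (η * (B + 2*Bα + η)) * 2 := hle
    _ ≤ η0 / 2 := le_trans hstep hstep2
    _ < η0 := by linarith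
end
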